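/- arXiv:2209.12022 — 2 statements merged into one kernel-verified Lean document; each statement's English description precedes it below -/
import Mathlib

section
/- Valiron's inequality: for a power series f(z) = Σ a_k z^k with radius of convergence R, and 0 ≤ r < r₁ < R, the maximum modulus satisfies M(r,f) ≤ m(r₁,f)·(ν(r) + r₁/(r₁ - r)), where m(r,f) = max_k |a_k| r^k is the maximal term and ν(r) is the central index (the largest k for which |a_k| r^k = m(r,f)). -/
/-- Valiron's inequality: for a power series `f(z) = Σ a_k z^k` with radius of
convergence `R` (possibly infinite), `0 ≤ r < r₁ < R`, maximal term `m₁` at `r₁`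
and central index `ν` at `r`, every value of `f` on the circle `|z| = r` is
bounded by `m₁ * (ν + r₁/(r₁ - r))`; hence `M(r,f) ≤ m₁ * (ν + r₁/(r₁-r))`. -/
theorem valiron_inequality
    (a : ℕ → ℂ) (R : EReal) (r r₁ : ℝ) (m m₁ : ℝ) (ν : ℕ)
    (hr : 0 ≤ r) (hrr₁ : r < r₁) (hr₁R : (r₁ : EReal) < R)
    (hsum : ∀ z : ℂ, (‖z‖ : EReal) < R → Summable (fun k => a k * z ^ k))
    (hne : ∃ k, a k ≠ 0)
    -- `m` is the maximal term at `r` and `ν` is the central index at `r`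
    (hm : IsGreatest {x : ℝ | ∃ k : ℕ, x = ‖a k‖ * r ^ k} m)
    (hν : ‖a ν‖ * r ^ ν = m ∧
      ∀ k : ℕ, ‖a k‖ * r ^ k = m → k ≤ ν)
    -- `m₁` is the maximal term at `r₁`
    (hm₁ : IsGreatest {x : ℝ | ∃ k : ℕ, x = ‖a k‖ * r₁ ^ k} m₁) :
    ∀ z : ℂ, ‖z‖ = r →
      ‖∑' k : ℕ, a k * z ^ k‖ ≤ m₁ * ((ν : ℝ) + r₁ / (r₁ - r)) := by
  intro z hz
  have hr₁ : 0 < r₁ := lt_of_le_of_lt hr hrr₁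
  have hq0 : 0 ≤ r / r₁ := div_nonneg hr hr₁.le
  have hq1 : r / r₁ < 1 := (div_lt_one hr₁).mpr hrr₁
  have hzR : (‖z‖ : EReal) < R := by
    rw [hz]; exact lt_trans (by exact_mod_cast hrr₁) hr₁R
  have hsz := hsum z hzR
  have hnorm : ∀ k, ‖a k * z ^ k‖ = ‖a k‖ * r ^ k := by
    intro k
    rw [norm_mul, norm_pow, hz]
  have habs : Summable (fun k => ‖a k‖ * r ^ k) := by
    have h := summable_norm_iff.mpr hsz
    simpa only [hnorm] using h
  have key : ∀ k, ‖a k‖ * r ^ k ≤ m₁ * (r / r₁) ^ k := by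
    intro k
    have h1 : ‖a k‖ * r₁ ^ k ≤ m₁ := hm₁.2 ⟨k, rfl⟩
    have h2 : ‖a k‖ * r ^ k
        = (‖a k‖ * r₁ ^ k) * (r / r₁) ^ k := by
      rw [div_pow]; field_simp
    rw [h2]
    exact mul_le_mul_of_nonneg_right h1 (pow_nonneg hq0 k)
  have keyν : ∀ k, ‖a k‖ * r ^ k ≤ m₁ := fun k =>
    le_trans
      (mul_le_mul_of_nonneg_left (pow_le_pow_left₀ hr hrr₁.le k) (norm_nonneg _))
      (hm₁.2 ⟨k, rfl⟩)
  have hm₁0 : 0 ≤ m₁ := le_trans (by positivity) (keyν 0)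
  -- bound |tsum| by tsum of absolute values
  have hle1 : ‖∑' k : ℕ, a k * z ^ k‖
      ≤ ∑' k : ℕ, ‖a k‖ * r ^ k := by
    have := norm_tsum_le_tsum_norm (f := fun k : ℕ => a k * z ^ k)
      (by simpa only [hnorm] using habs)
    calc ‖∑' k : ℕ, a k * z ^ k‖ ≤ ∑' k : ℕ, ‖a k * z ^ k‖ := this
      _ = ∑' k : ℕ, ‖a k‖ * r ^ k := tsum_congr hnorm
  -- split the sum
  have hsplit := Summable.sum_add_tsum_nat_add (f := fun k => ‖a k‖ * r ^ k) ν habs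
  have htail_summable : Summable
      (fun k => ‖a (k + ν)‖ * r ^ (k + ν)) := by
    exact (summable_nat_add_iff ν).mpr habs
  have hgeo : Summable (fun k : ℕ => m₁ * (r / r₁) ^ k) :=
    (summable_geometric_of_lt_one hq0 hq1).mul_left m₁
  have htail : (∑' k : ℕ, ‖a (k + ν)‖ * r ^ (k + ν))
      ≤ m₁ * (r₁ / (r₁ - r)) := by
    have h1 : (∑' k : ℕ, ‖a (k + ν)‖ * r ^ (k + ν))
        ≤ ∑' k : ℕ, m₁ * (r / r₁) ^ k := by
      refine Summable.tsum_le_tsum (fun k => ?_) htail_summable hgeo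
      refine le_trans (key (k + ν)) ?_
      refine mul_le_mul_of_nonneg_left ?_ hm₁0
      exact pow_le_pow_of_le_one hq0 hq1.le (Nat.le_add_right k ν)
    have h2 : (∑' k : ℕ, m₁ * (r / r₁) ^ k) = m₁ * (r₁ / (r₁ - r)) := by
      rw [tsum_mul_left, tsum_geometric_of_lt_one hq0 hq1]
      congr 1
      rw [one_sub_div hr₁.ne', inv_div]
    exact h1.trans (le_of_eq h2)
  have hhead : (∑ i ∈ Finset.range ν, ‖a i‖ * r ^ i) ≤ ν * m₁ := by
    calc (∑ i ∈ Finset.range ν, ‖a i‖ * r ^ i)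
        ≤ ∑ _i ∈ Finset.range ν, m₁ := Finset.sum_le_sum (fun i _ => keyν i)
      _ = ν * m₁ := by rw [Finset.sum_const, Finset.card_range, nsmul_eq_mul]
  have : (∑' k : ℕ, ‖a k‖ * r ^ k)
      ≤ ν * m₁ + m₁ * (r₁ / (r₁ - r)) := by
    rw [← hsplit]
    exact add_le_add hhead htail
  refine hle1.trans (this.trans (le_of_eq (by ring)))
end

section
/- Central index growth inequality: for a power series f with radius of convergence R and 0 < r < r₁ < R, one has ν(r)·log(r₁/r) ≤ log m(r₁,f) − log m(r,f), where m is the maximal term and ν the central index. -/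
/-- Central index growth inequality: `ν(r) · log(r₁/r) ≤ log m(r₁) − log m(r)`
for `0 < r < r₁ < R`, where `m` is the maximal term and `ν` the central index. -/
theorem central_index_growth
    (a : ℕ → ℂ) (R : EReal) (r r₁ : ℝ) (m m₁ : ℝ) (ν : ℕ)
    (hr : 0 < r) (hrr₁ : r < r₁) (hr₁R : (r₁ : EReal) < R)
    (hsum : ∀ z : ℂ, (‖z‖ : EReal) < R → Summable (fun k => a k * z ^ k))
    (hne : ∃ k, a k ≠ 0)
    (hm : IsGreatest {x : ℝ | ∃ k : ℕ, x = ‖a k‖ * r ^ k} m)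
    (hν : ‖a ν‖ * r ^ ν = m ∧
      ∀ k : ℕ, ‖a k‖ * r ^ k = m → k ≤ ν)
    (hm₁ : IsGreatest {x : ℝ | ∃ k : ℕ, x = ‖a k‖ * r₁ ^ k} m₁) :
    (ν : ℝ) * Real.log (r₁ / r) ≤ Real.log m₁ - Real.log m := by
  obtain ⟨k, hk⟩ := hne
  have hr₁ : 0 < r₁ := hr.trans hrr₁
  have hmk : ‖a k‖ * r ^ k ≤ m := hm.2 ⟨k, rfl⟩
  have hmpos : 0 < m := lt_of_lt_of_le (mul_pos (norm_pos_iff.mpr hk) (pow_pos hr k)) hmk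
  have haν : 0 < ‖a ν‖ := by
    by_contra h
    push_neg at h
    have : ‖a ν‖ = 0 := le_antisymm h (norm_nonneg _)
    rw [this, zero_mul] at hν
    exact absurd hν.1 (by linarith)
  have key : m * (r₁ / r) ^ ν ≤ m₁ := by
    have h1 : ‖a ν‖ * r₁ ^ ν ≤ m₁ := hm₁.2 ⟨ν, rfl⟩
    have : m * (r₁ / r) ^ ν = ‖a ν‖ * r₁ ^ ν := by
      rw [← hν.1, div_pow]
      field_simp
    linarith [this ▸ h1]
  have hpow : 0 < m * (r₁ / r) ^ ν := by positivity
  have hlog := Real.log_le_log hpow key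
  rw [Real.log_mul (ne_of_gt hmpos) (by positivity), Real.log_pow] at hlog
  linarith
end
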